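/- Let 1 ≤ n' ≤ n and let A be a full-rank n'×n complex matrix with singular values σ₁(A) ≥ ... ≥ σ_{n'}(A) > 0 and rows X₁,...,X_{n'} ∈ ℂⁿ. For each 1 ≤ i ≤ n', let Wᵢ be the span of the n'−1 rows X₁,...,X_{i−1},X_{i+1},...,X_{n'}. Then ∑_{j=1}^{n'} σⱼ(A)^{−2} = ∑_{j=1}^{n'} dist(Xⱼ, Wⱼ)^{−2}. -/

import Mathlib

open Matrix Polynomial in
lemma aux_charpoly_conj {m : Type*} [Fintype m] [DecidableEq m] {R : Type*} [CommRing R]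
    (U D V : Matrix m m R) (hUV : U * V = 1) (hVU : V * U = 1) :
    (U * D * V).charpoly = D.charpoly := by
  have hmap : charmatrix (U * D * V) =
      U.map C * charmatrix D * V.map C := by
    rw [charmatrix, charmatrix, mul_sub, sub_mul]
    congr 1
    · symm
      rw [← (Matrix.scalar_commute (X : R[X]) (fun r => Commute.all _ r) (U.map C)).eq, mul_assoc,
        ← Matrix.map_mul, hUV, Matrix.map_one _ (map_zero C) (map_one C), mul_one]
    · simp only [RingHom.mapMatrix_apply, Matrix.map_mul]
  rw [Matrix.charpoly, Matrix.charpoly, hmap, det_mul, det_mul, mul_comm, ← mul_assoc,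
    ← det_mul, ← Matrix.map_mul, hVU, Matrix.map_one _ (map_zero C) (map_one C), det_one, one_mul]

open Matrix Polynomial in
lemma aux_charpoly_diagonal {m : Type*} [Fintype m] [DecidableEq m] {R : Type*} [CommRing R]
    (d : m → R) : (Matrix.diagonal d).charpoly = ∏ i, (X - C (d i)) := by
  rw [Matrix.charpoly]
  have : charmatrix (Matrix.diagonal d) = Matrix.diagonal (fun i => X - C (d i)) := by
    ext i j
    rcases eq_or_ne i j with rfl | h
    · simp
    · simp [h, Matrix.diagonal_apply_ne _ h]
  rw [this, det_diagonal]

open Matrix Polynomial in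
lemma aux_roots_charpoly_hermitian {m : Type*} [Fintype m] [DecidableEq m]
    {G : Matrix m m ℂ} (hG : G.IsHermitian) :
    G.charpoly.roots = Multiset.map (fun i => (hG.eigenvalues i : ℂ)) Finset.univ.val := by
  have hU1 : (hG.eigenvectorUnitary : Matrix m m ℂ) * star (hG.eigenvectorUnitary : Matrix m m ℂ) = 1 :=
    Matrix.mem_unitaryGroup_iff.mp hG.eigenvectorUnitary.2
  have hU2 : star (hG.eigenvectorUnitary : Matrix m m ℂ) * (hG.eigenvectorUnitary : Matrix m m ℂ) = 1 :=
    Matrix.mem_unitaryGroup_iff'.mp hG.eigenvectorUnitary.2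
  have h1 : G.charpoly = (Matrix.diagonal (fun i => (hG.eigenvalues i : ℂ))).charpoly := by
    conv_lhs => rw [hG.spectral_theorem]
    exact aux_charpoly_conj _ _ _ hU1 hU2
  rw [h1, aux_charpoly_diagonal]
  have : ∏ i, (X - C ((hG.eigenvalues i : ℂ))) =
      ((Finset.univ.val.map (fun i => ((hG.eigenvalues i : ℂ)))).map (fun a => X - C a)).prod := by
    rw [Multiset.map_map]; rfl
  rw [this, roots_multiset_prod_X_sub_C]

open scoped InnerProductSpace in
/-- Negative second moment identity: for a full-rank `n' × n` complex matrix `A` with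
singular values `σ₁ ≥ ... ≥ σ_{n'} > 0` and rows `X₁, ..., X_{n'}`,
`∑ⱼ σⱼ(A)⁻² = ∑ⱼ dist(Xⱼ, Wⱼ)⁻²` where `Wⱼ` is the span of the other rows. -/
theorem stmt_4 (n n' : ℕ) (hn'1 : 1 ≤ n') (hn' : n' ≤ n)
    (A : Matrix (Fin n') (Fin n) ℂ) (hrank : A.rank = n')
    (σ : Fin n' → ℝ) (hσ0 : ∀ i, 0 < σ i) (hσmono : Antitone σ)
    (hσ : (Matrix.charpoly (A * A.conjTranspose)).roots
      = Multiset.map (fun i => ((σ i : ℂ)) ^ 2) Finset.univ.val) :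
    ∑ j, (σ j ^ 2)⁻¹ =
      ∑ j, (Metric.infDist ((WithLp.equiv 2 (Fin n → ℂ)).symm (A j))
        ((Submodule.span ℂ
          ((fun i => (WithLp.equiv 2 (Fin n → ℂ)).symm (A i)) '' {i | i ≠ j}) :
            Submodule ℂ (EuclideanSpace ℂ (Fin n))) : Set (EuclideanSpace ℂ (Fin n))) ^ 2)⁻¹ := by
  classical
  set G := A * A.conjTranspose with hGdef
  have hGher : G.IsHermitian := Matrix.isHermitian_mul_conjTranspose_self A
  set X : Fin n' → EuclideanSpace ℂ (Fin n) :=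
    fun i => (WithLp.equiv 2 (Fin n → ℂ)).symm (A i) with hXdef
  -- eigenvalue multiset
  have hroots := aux_roots_charpoly_hermitian hGher
  have hmult : Multiset.map (fun i => (hGher.eigenvalues i : ℂ)) Finset.univ.val
      = Multiset.map (fun i => ((σ i : ℂ)) ^ 2) Finset.univ.val := hroots.symm.trans hσ
  have heig_ne : ∀ i, (hGher.eigenvalues i : ℂ) ≠ 0 := by
    intro i
    have hmem : (hGher.eigenvalues i : ℂ) ∈
        Multiset.map (fun i => ((σ i : ℂ)) ^ 2) Finset.univ.val := by
      rw [← hmult]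
      exact Multiset.mem_map_of_mem _ (Finset.mem_univ i)
    obtain ⟨k, _, hk⟩ := Multiset.mem_map.mp hmem
    rw [← hk]
    exact pow_ne_zero _ (by exact_mod_cast (hσ0 k).ne')
  -- invertibility
  have hdetu : IsUnit G.det := by
    rw [Matrix.det_eq_prod_roots_charpoly, hσ, isUnit_iff_ne_zero]
    refine Multiset.prod_ne_zero (fun hmem => ?_)
    obtain ⟨k, _, hk⟩ := Multiset.mem_map.mp hmem
    exact pow_ne_zero 2 (by exact_mod_cast (hσ0 k).ne' : ((σ k : ℂ)) ≠ 0) hk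
  have hGinv : G * G⁻¹ = 1 := Matrix.mul_nonsing_inv _ hdetu
  have hGinv' : G⁻¹ * G = 1 := Matrix.nonsing_inv_mul _ hdetu
  -- trace identity
  have htr : ∑ j, (G⁻¹ j j) = ∑ j, (((σ j : ℂ)) ^ 2)⁻¹ := by
    have hU1 : (hGher.eigenvectorUnitary : Matrix (Fin n') (Fin n') ℂ) *
        star (hGher.eigenvectorUnitary : Matrix (Fin n') (Fin n') ℂ) = 1 :=
      Matrix.mem_unitaryGroup_iff.mp hGher.eigenvectorUnitary.2
    have hU2 : star (hGher.eigenvectorUnitary : Matrix (Fin n') (Fin n') ℂ) *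
        (hGher.eigenvectorUnitary : Matrix (Fin n') (Fin n') ℂ) = 1 :=
      Matrix.mem_unitaryGroup_iff'.mp hGher.eigenvectorUnitary.2
    set U : Matrix (Fin n') (Fin n') ℂ :=
      (hGher.eigenvectorUnitary : Matrix (Fin n') (Fin n') ℂ) with hUdef
    set d : Fin n' → ℂ := fun i => (hGher.eigenvalues i : ℂ) with hd
    have hdd : Matrix.diagonal d * Matrix.diagonal (fun i => (d i)⁻¹) = 1 := by
      rw [Matrix.diagonal_mul_diagonal]
      have h1 : (fun i => d i * (d i)⁻¹) = fun _ => (1 : ℂ) := by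
        funext i; exact mul_inv_cancel₀ (heig_ne i)
      rw [h1, Matrix.diagonal_one]
    have hGeq : G = U * Matrix.diagonal d * star U := by
      conv_lhs => rw [hGher.spectral_theorem]
      rfl
    have hright : G * (U * Matrix.diagonal (fun i => (d i)⁻¹) * star U) = 1 := by
      rw [hGeq]
      have hassoc : U * Matrix.diagonal d * star U *
            (U * Matrix.diagonal (fun i => (d i)⁻¹) * star U)
          = U * (Matrix.diagonal d *
            ((star U * U) * (Matrix.diagonal (fun i => (d i)⁻¹) * star U))) := by
        simp only [mul_assoc]
      rw [hassoc, hU2, one_mul, ← mul_assoc (Matrix.diagonal d), hdd, one_mul, hU1]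
    have hGinv_eq : G⁻¹ = U * Matrix.diagonal (fun i => (d i)⁻¹) * star U :=
      Matrix.inv_eq_right_inv hright
    have htrace : ∑ j, G⁻¹ j j = ∑ i, (d i)⁻¹ := by
      have h2 : ∑ j, G⁻¹ j j = Matrix.trace G⁻¹ := by simp [Matrix.trace, Matrix.diag]
      rw [h2, hGinv_eq, Matrix.trace_mul_cycle, hU2, one_mul, Matrix.trace_diagonal]
    have hsum : ∑ i, (d i)⁻¹ = ∑ i, (((σ i : ℂ)) ^ 2)⁻¹ := by
      have h := congrArg (fun s => (Multiset.map (fun z : ℂ => z⁻¹) s).sum) hmult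
      simp only [Multiset.map_map, Function.comp] at h
      rw [Finset.sum_eq_multiset_sum, Finset.sum_eq_multiset_sum]
      exact h
    rw [htrace, hsum]
  -- inner products of rows
  have hinner : ∀ i l : Fin n', ⟪X l, X i⟫_ℂ = G i l := by
    intro i l
    simp only [hXdef, PiLp.inner_apply, RCLike.inner_apply,
      hGdef, Matrix.mul_apply, Matrix.conjTranspose_apply]
    exact Finset.sum_congr rfl fun k _ => rfl
  -- linear independence of rows
  have hli : LinearIndependent ℂ X := by
    refine Fintype.linearIndependent_iff.mpr (fun g hg i => ?_)
    have hvm : Matrix.vecMul g G = 0 := by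
      funext l
      have h0 : ⟪X l, (0 : EuclideanSpace ℂ (Fin n))⟫_ℂ = 0 := inner_zero_right _
      rw [← hg, inner_sum] at h0
      simp only [inner_smul_right, hinner] at h0
      simpa [Matrix.vecMul, dotProduct] using h0
    have hgg := congrArg (fun v => Matrix.vecMul v G⁻¹) hvm
    simp only [Matrix.vecMul_vecMul, hGinv, Matrix.vecMul_one, Matrix.zero_vecMul] at hgg
    exact congrFun hgg i
  -- geometry: diagonal of inverse Gram
  have hgeom : ∀ j : Fin n',
      G⁻¹ j j = (((Metric.infDist (X j)
        ((Submodule.span ℂ (X '' {i | i ≠ j}) :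
          Submodule ℂ (EuclideanSpace ℂ (Fin n))) : Set (EuclideanSpace ℂ (Fin n)))) ^ 2 : ℝ) : ℂ)⁻¹ := by
    intro j
    set K : Submodule ℂ (EuclideanSpace ℂ (Fin n)) := Submodule.span ℂ (X '' {i | i ≠ j}) with hK
    set u : EuclideanSpace ℂ (Fin n) :=
      X j - (K.orthogonalProjection (X j) : EuclideanSpace ℂ (Fin n)) with hu
    have huK : u ∈ Kᗮ := Submodule.sub_starProjection_mem_orthogonal (K := K) (X j)
    have hXK : ∀ i, i ≠ j → X i ∈ K := fun i hi => Submodule.subset_span ⟨i, hi, rfl⟩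
    have hinner_u : ∀ l, ⟪X l, u⟫_ℂ = if l = j then ((‖u‖ : ℂ)) ^ 2 else 0 := by
      intro l
      rcases eq_or_ne l j with rfl | h
      · rw [if_pos rfl]
        have hXl : X l = (K.orthogonalProjection (X l) : EuclideanSpace ℂ (Fin n)) + u := by
          rw [hu]; abel
        rw [hXl, inner_add_left,
          (Submodule.mem_orthogonal K u).mp huK _ (K.orthogonalProjection (X l)).2,
          zero_add, inner_self_eq_norm_sq_to_K]
        norm_cast
      · rw [if_neg h]
        exact (Submodule.mem_orthogonal K u).mp huK _ (hXK l h)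
    have hu0 : u ≠ 0 := by
      intro h0
      have hXjK : X j ∈ K := by
        rw [hu, sub_eq_zero] at h0
        rw [h0]; exact (K.orthogonalProjection (X j)).2
      exact hli.notMem_span_image (by simp : ¬ (j ∈ {i : Fin n' | i ≠ j})) hXjK
    have hu2ne : ((‖u‖ : ℂ)) ^ 2 ≠ 0 :=
      pow_ne_zero 2 (Complex.ofReal_ne_zero.mpr (norm_ne_zero_iff.mpr hu0))
    have hu_span : u ∈ Submodule.span ℂ (Set.range X) := by
      refine Submodule.sub_mem _ (Submodule.subset_span ⟨j, rfl⟩) ?_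
      exact Submodule.span_mono (Set.image_subset_range X _)
        (K.orthogonalProjection (X j)).2
    obtain ⟨c, hc⟩ := (Submodule.mem_span_range_iff_exists_fun ℂ).mp hu_span
    have hvec : Matrix.vecMul c G = Pi.single j (((‖u‖ : ℂ)) ^ 2) := by
      funext l
      have h1 : Matrix.vecMul c G l = ⟪X l, u⟫_ℂ := by
        rw [← hc, inner_sum]
        simp only [inner_smul_right, hinner]
        simp [Matrix.vecMul, dotProduct]
      rw [h1, hinner_u l, Pi.single_apply]
    have hc2 : c = Matrix.vecMul (Pi.single j (((‖u‖ : ℂ)) ^ 2)) G⁻¹ := by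
      rw [← hvec, Matrix.vecMul_vecMul, hGinv, Matrix.vecMul_one]
    have hcj : c j = ((‖u‖ : ℂ)) ^ 2 * G⁻¹ j j := by
      rw [hc2]
      simp [Matrix.vecMul, dotProduct, Pi.single_apply, Finset.sum_ite_eq]
    have hcj1 : c j = 1 := by
      have h3 : ((‖u‖ : ℂ)) ^ 2 = c j * ((‖u‖ : ℂ)) ^ 2 := by
        calc ((‖u‖ : ℂ)) ^ 2 = ⟪u, u⟫_ℂ := (inner_self_eq_norm_sq_to_K u).symm
          _ = ⟪u, ∑ i, c i • X i⟫_ℂ := by rw [hc]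
          _ = ∑ i, c i * ⟪u, X i⟫_ℂ := by rw [inner_sum]; simp [inner_smul_right]
          _ = c j * ((‖u‖ : ℂ)) ^ 2 := by
              rw [Finset.sum_eq_single j]
              · congr 1
                rw [← inner_conj_symm, hinner_u j, if_pos rfl]
                simp [map_pow, Complex.conj_ofReal]
              · intro b _ hb
                rw [← inner_conj_symm, hinner_u b, if_neg hb, map_zero, mul_zero]
              · intro h; exact absurd (Finset.mem_univ j) h
      have h4 : c j * ((‖u‖ : ℂ)) ^ 2 = 1 * ((‖u‖ : ℂ)) ^ 2 := by rw [one_mul, ← h3]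
      exact mul_right_cancel₀ hu2ne h4
    have hGjj : G⁻¹ j j = (((‖u‖ : ℂ)) ^ 2)⁻¹ := by
      have h5 : ((‖u‖ : ℂ)) ^ 2 * G⁻¹ j j = 1 := by rw [← hcj, hcj1]
      have h6 : ((‖u‖ : ℂ)) ^ 2 * G⁻¹ j j
          = ((‖u‖ : ℂ)) ^ 2 * (((‖u‖ : ℂ)) ^ 2)⁻¹ := by
        rw [h5, mul_inv_cancel₀ hu2ne]
      exact mul_left_cancel₀ hu2ne h6
    have hdist : Metric.infDist (X j) (K : Set (EuclideanSpace ℂ (Fin n))) = ‖u‖ := by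
      rw [Metric.infDist_eq_iInf]
      simp_rw [dist_eq_norm]
      exact (Submodule.starProjection_minimal (X j)).symm
    rw [hGjj, hdist]
    norm_cast
  -- conclude
  have hfinal : ((∑ j, (σ j ^ 2)⁻¹ : ℝ) : ℂ)
      = ((∑ j, (Metric.infDist (X j)
        ((Submodule.span ℂ (X '' {i | i ≠ j}) :
          Submodule ℂ (EuclideanSpace ℂ (Fin n))) : Set (EuclideanSpace ℂ (Fin n))) ^ 2)⁻¹ : ℝ) : ℂ) := by
    push_cast
    rw [← htr]
    refine Finset.sum_congr rfl fun j _ => ?_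
    rw [hgeom j]
    push_cast
    ring
  show ∑ j, (σ j ^ 2)⁻¹ = ∑ j, (Metric.infDist (X j)
      ((Submodule.span ℂ (X '' {i | i ≠ j}) :
        Submodule ℂ (EuclideanSpace ℂ (Fin n))) : Set (EuclideanSpace ℂ (Fin n))) ^ 2)⁻¹
  exact_mod_cast hfinal
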